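/- arXiv:math/0606150 — 2 statements merged into one kernel-verified Lean document; each statement's English description precedes it below -/
import Mathlib

section
/- The two-sided ideal of ℂ⟨⟨x,y⟩⟩ (noncommutative power series in two variables) consisting of all series each of whose monomials with nonzero coefficient contains at least one factor x is NOT finitely generated as a two-sided ideal in the algebraic sense; in particular, the element Σ_{k≥1} y^k x y^k cannot be written as a finite sum Σ_{i=1}^N f_i(y) · x · g_i(y) with f_i, g_i ∈ ℂ⟨⟨y⟩⟩. -/
/-- Convolution product on noncommutative power series in two variables
`x = 0`, `y = 1`. -/
noncomputable def ncMul (f g : List (Fin 2) → ℂ) : List (Fin 2) → ℂ :=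
  fun K => ∑ i ∈ Finset.range (K.length + 1), f (K.take i) * g (K.drop i)

/-- The variable `x` as a power series. -/
def xSer : List (Fin 2) → ℂ := fun K => if K = [(0 : Fin 2)] then 1 else 0

open Classical in
/-- The series `Σ_{k ≥ 1} y^k x y^k`. -/
noncomputable def hSer : List (Fin 2) → ℂ :=
  fun K => if h : ∃ k : ℕ, 1 ≤ k ∧
      K = List.replicate k (1 : Fin 2) ++ [(0 : Fin 2)] ++
          List.replicate k (1 : Fin 2)
    then 1 else 0

/-- A power series lies in `ℂ⟨⟨y⟩⟩`, i.e. is supported on words in the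
letter `y = 1` only. -/
def onlyY (f : List (Fin 2) → ℂ) : Prop :=
  ∀ K : List (Fin 2), f K ≠ 0 → ∀ a ∈ K, a = (1 : Fin 2)

/-- the word y^j x y^k -/
def wrd (j k : ℕ) : List (Fin 2) :=
  List.replicate j (1 : Fin 2) ++ ((0 : Fin 2) :: List.replicate k (1 : Fin 2))

lemma wrd_succ (j k : ℕ) : wrd (j + 1) k = (1 : Fin 2) :: wrd j k := by
  simp [wrd, List.replicate_succ]

lemma wrd_inj {j k j' k' : ℕ} (h : wrd j k = wrd j' k') : j = j' ∧ k = k' := by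
  induction j generalizing j' with
  | zero =>
    cases j' with
    | zero =>
      simp only [wrd, List.replicate, List.nil_append, List.cons.injEq] at h
      have := congrArg List.length h.2
      simp at this
      simp [this]
    | succ m => rw [wrd_succ] at h; simp [wrd] at h
  | succ n ih =>
    cases j' with
    | zero => rw [wrd_succ] at h; simp [wrd] at h
    | succ m =>
      rw [wrd_succ, wrd_succ] at h
      obtain ⟨h1, h2⟩ := ih (List.cons_injective h)
      exact ⟨by omega, h2⟩

lemma hSer_wrd (j k : ℕ) :
    hSer (wrd j k) = if 1 ≤ j ∧ j = k then 1 else 0 := by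
  classical
  unfold hSer
  split_ifs with h1 h2 h2
  · rfl
  · exfalso
    obtain ⟨m, hm, heq⟩ := h1
    have : wrd j k = wrd m m := by
      rw [heq]; simp [wrd]
    obtain ⟨rfl, rfl⟩ := wrd_inj this
    exact h2 ⟨hm, rfl⟩
  · exfalso
    exact h1 ⟨j, h2.1, by rw [← h2.2]; simp [wrd]⟩
  · rfl

lemma ncMul_xSer_cons_one (g : List (Fin 2) → ℂ) (L : List (Fin 2)) :
    ncMul xSer g ((1 : Fin 2) :: L) = 0 := by
  unfold ncMul
  apply Finset.sum_eq_zero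
  intro t _
  have : xSer (((1 : Fin 2) :: L).take t) = 0 := by
    cases t with
    | zero => simp [xSer]
    | succ n =>
      simp only [List.take_succ_cons, xSer, ite_eq_right_iff]
      simp
  rw [this, zero_mul]

lemma ncMul_xSer_cons_zero (g : List (Fin 2) → ℂ) (k : ℕ) :
    ncMul xSer g ((0 : Fin 2) :: List.replicate k (1 : Fin 2))
      = g (List.replicate k (1 : Fin 2)) := by
  unfold ncMul
  rw [Finset.sum_eq_single 1]
  · simp [xSer]
  · intro t ht htne
    have hxz : xSer (((0 : Fin 2) :: List.replicate k (1 : Fin 2)).take t) = 0 := by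
      simp only [xSer, ite_eq_right_iff]
      intro h
      have := congrArg List.length h
      simp at this ht
      omega
    rw [hxz, zero_mul]
  · intro h
    simp at h

lemma key (f g : List (Fin 2) → ℂ) (hf : onlyY f) (j k : ℕ) :
    ncMul f (ncMul xSer g) (wrd j k)
      = f (List.replicate j (1 : Fin 2)) * g (List.replicate k (1 : Fin 2)) := by
  show ∑ s ∈ Finset.range ((wrd j k).length + 1),
      f ((wrd j k).take s) * ncMul xSer g ((wrd j k).drop s) = _
  have hlen : (wrd j k).length = j + k + 1 := by simp [wrd]; omega
  rw [hlen]
  rw [Finset.sum_eq_single j]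
  · have ht : (wrd j k).take j = List.replicate j (1 : Fin 2) := by
      simp [wrd, List.take_append_of_le_length]
    have hd : (wrd j k).drop j = (0 : Fin 2) :: List.replicate k (1 : Fin 2) := by
      simp [wrd, List.drop_append_of_le_length]
    rw [ht, hd, ncMul_xSer_cons_zero]
  · intro s _ hs
    rcases lt_or_gt_of_ne hs with hlt | hgt
    · -- s < j : the inner product vanishes
      have hd : (wrd j k).drop s = wrd (j - s) k := by
        have : (List.replicate j (1 : Fin 2)).drop s
            = List.replicate (j - s) (1 : Fin 2) := List.drop_replicate ..
        simp [wrd, List.drop_append_of_le_length, hlt.le, this]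
      have hjs : j - s = (j - s - 1) + 1 := by omega
      rw [hd, hjs, wrd_succ, ncMul_xSer_cons_one, mul_zero]
    · -- s > j : f vanishes on the prefix containing x
      have hmem : (0 : Fin 2) ∈ (wrd j k).take s := by
        have : (wrd j k).take s
            = List.replicate j (1 : Fin 2)
              ++ (((0 : Fin 2) :: List.replicate k (1 : Fin 2)).take (s - j)) := by
          rw [wrd, List.take_append]
          congr 1
          · exact List.take_of_length_le (by simp; omega)
          · simp
        rw [this]
        have hs1 : s - j = (s - j - 1) + 1 := by omega
        rw [hs1]
        simp
      have hfz : f ((wrd j k).take s) = 0 := by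
        by_contra hne
        have := hf _ hne 0 hmem
        simp at this
      rw [hfz, zero_mul]
  · intro h
    simp at h
    omega

/-- `Σ_{k ≥ 1} y^k x y^k` cannot be written as a finite sum
`Σ_{i=1}^N f_i(y) · x · g_i(y)` with `f_i, g_i ∈ ℂ⟨⟨y⟩⟩`; in particular the
two-sided ideal `(x)` of `ℂ⟨⟨x,y⟩⟩` is not algebraically finitely generated. -/
theorem hSer_not_finite_combination :
    ¬ ∃ (N : ℕ) (f g : Fin N → (List (Fin 2) → ℂ)),
        (∀ i, onlyY (f i)) ∧ (∀ i, onlyY (g i)) ∧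
        (∀ K : List (Fin 2),
          hSer K = ∑ i : Fin N, ncMul (f i) (ncMul xSer (g i)) K) := by
  rintro ⟨N, f, g, hf, hg, hK⟩
  set A : Matrix (Fin (N + 1)) (Fin N) ℂ :=
    fun j i => f i (List.replicate ((j : ℕ) + 1) (1 : Fin 2)) with hA
  set B : Matrix (Fin N) (Fin (N + 1)) ℂ :=
    fun i k => g i (List.replicate ((k : ℕ) + 1) (1 : Fin 2)) with hB
  have hAB : A * B = 1 := by
    ext j k
    have := hK (wrd ((j : ℕ) + 1) ((k : ℕ) + 1))
    rw [hSer_wrd] at this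
    have hsum : ∑ i : Fin N, ncMul (f i) (ncMul xSer (g i)) (wrd ((j : ℕ) + 1) ((k : ℕ) + 1))
        = ∑ i : Fin N, A j i * B i k := by
      apply Finset.sum_congr rfl
      intro i _
      rw [key (f i) (g i) (hf i)]
    rw [hsum] at this
    rw [Matrix.mul_apply, ← this, Matrix.one_apply]
    have : ((j : ℕ) + 1 = (k : ℕ) + 1) ↔ (j = k) := by
      constructor
      · intro h; exact Fin.ext (by omega)
      · intro h; rw [h]
    simp [this, Fin.val_inj]
  have h1 : (A * B).rank = N + 1 := by
    rw [hAB, Matrix.rank_one]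
    simp
  have h2 : (A * B).rank ≤ N := by
    calc (A * B).rank ≤ A.rank := Matrix.rank_mul_le_left A B
    _ ≤ Fintype.card (Fin N) := A.rank_le_card_width
    _ = N := by simp
  omega
end

section
/- Let f = Σ_I a_I (x−p)^I be a noncommutative power series whose abelized absolute-value series Σ_I |a_I| (x−p)^I converges on the open polydisk P(p,r). Then for every word J and every point q ∈ P(p,r), the series a_J(q) := Σ_{I ≥ J} (I choose J) a_I (q−p)^{I−J} converges absolutely. -/
/-- `(I choose J)`: the number of order-preserving injective letter-respecting
maps from `J` to `I`. -/
noncomputable def chooseCount {n : ℕ} (I J : List (Fin n)) : ℕ :=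
  Set.ncard {α : Fin J.length → Fin I.length |
    StrictMono α ∧ ∀ k, J.get k = I.get (α k)}

/-- `w^I`: product of the values of `w` over the letters of the word `I`. -/
def wprod {n : ℕ} (w : Fin n → ℂ) (I : List (Fin n)) : ℂ := (I.map w).prod

/-- `w^M` for a multiset of letters `M`. -/
def mprod {n : ℕ} (w : Fin n → ℂ) (M : Multiset (Fin n)) : ℂ := (M.map w).prod

/-- `(q−p)^{I−J}`: the product over the letters of `I` remaining after
deleting an embedded copy of `J` (as multisets; independent of the embedding). -/
noncomputable def diffProd {n : ℕ} (p q : Fin n → ℂ) (I J : List (Fin n)) : ℂ :=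
  mprod (fun i => q i - p i) ((I : Multiset (Fin n)) - (J : Multiset (Fin n)))

/-- if `Σ_I |a_I| (x−p)^I` converges on the polydisk `P(p,r)`,
then for every word `J` and every `q ∈ P(p,r)` the series
`a_J(q) = Σ_{I ≥ J} (I choose J) a_I (q−p)^{I−J}` converges absolutely. -/
theorem reexpansion_coefficients_converge {n : ℕ}
    (a : List (Fin n) → ℂ) (p : Fin n → ℂ) (r : Fin n → ℝ)
    (hr : ∀ i, 0 < r i)
    (hconv : ∀ z : Fin n → ℂ, (∀ i, ‖z i - p i‖ < r i) →
      Summable (fun I : List (Fin n) =>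
        ‖a I‖ * ‖wprod (fun i => z i - p i) I‖))
    (q : Fin n → ℂ) (hq : ∀ i, ‖q i - p i‖ < r i)
    (J : List (Fin n)) :
    Summable (fun I : List (Fin n) =>
      (chooseCount I J : ℝ) * ‖a I‖ *
        ‖diffProd p q I J‖) := by
  classical
  rcases Nat.eq_zero_or_pos n with hn | hn
  · subst hn
    haveI : Unique (List (Fin 0)) :=
      ⟨⟨[]⟩, fun l => by
        cases l with
        | nil => rfl
        | cons h t => exact h.elim0⟩
    exact Summable.of_finite
  haveI : Nonempty (Fin n) := ⟨⟨0, hn⟩⟩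
  -- intermediate radii
  set t : Fin n → ℝ := fun i => (‖q i - p i‖ + r i) / 2 with ht_def
  set u : Fin n → ℝ := fun i => (t i + r i) / 2 with hu_def
  have hqt : ∀ i, ‖q i - p i‖ < t i := fun i => by
    have := hq i; simp only [ht_def]; linarith
  have ht0 : ∀ i, 0 < t i := fun i =>
    lt_of_le_of_lt (norm_nonneg _) (hqt i)
  have htr : ∀ i, t i < r i := fun i => by
    have := hq i; simp only [ht_def]; linarith
  have htu : ∀ i, t i < u i := fun i => by
    have := htr i; simp only [hu_def]; linarith
  have hu0 : ∀ i, 0 < u i := fun i => (ht0 i).trans (htu i)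
  have hur : ∀ i, u i < r i := fun i => by
    have := htr i; simp only [hu_def]; linarith
  -- the ratio θ < 1
  set θ : ℝ := Finset.univ.sup' Finset.univ_nonempty (fun i => t i / u i) with hθ_def
  have hθ1 : θ < 1 := by
    rw [hθ_def, Finset.sup'_lt_iff]
    exact fun i _ => (div_lt_one (hu0 i)).2 (htu i)
  have hθ0 : 0 ≤ θ := by
    obtain ⟨i⟩ := ‹Nonempty (Fin n)›
    exact le_trans (div_nonneg (ht0 i).le (hu0 i).le)
      (Finset.le_sup' (fun i => t i / u i) (Finset.mem_univ i))
  have hratio : ∀ i, t i ≤ θ * u i := fun i => by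
    have h : t i / u i ≤ θ :=
      Finset.le_sup' (fun i => t i / u i) (Finset.mem_univ i)
    calc t i = (t i / u i) * u i := (div_mul_cancel₀ _ (hu0 i).ne').symm
    _ ≤ θ * u i := mul_le_mul_of_nonneg_right h (hu0 i).le
  -- uniform bound K for m ^ k * θ ^ m
  have hsum : Summable (fun m : ℕ => (m : ℝ) ^ J.length * θ ^ m) :=
    summable_pow_mul_geometric_of_norm_lt_one J.length
      (by rw [Real.norm_eq_abs, abs_of_nonneg hθ0]; exact hθ1)
  obtain ⟨K, hK⟩ := hsum.tendsto_atTop_zero.bddAbove_range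
  have hK' : ∀ m : ℕ, (m : ℝ) ^ J.length * θ ^ m ≤ K := fun m =>
    hK (Set.mem_range_self m)
  have hK0 : 0 ≤ K := le_trans (by positivity) (hK' 1)
  have htJ : 0 < (J.map t).prod :=
    List.prod_pos (by intro x hx; obtain ⟨i, _, rfl⟩ := List.mem_map.1 hx; exact ht0 i)
  -- nonneg products
  have hprodnn : ∀ (f : Fin n → ℝ), (∀ i, 0 ≤ f i) → ∀ I : List (Fin n),
      0 ≤ (I.map f).prod := fun f hf I =>
    List.prod_nonneg (by intro x hx; obtain ⟨i, _, rfl⟩ := List.mem_map.1 hx; exact hf i)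
  -- comparison point z
  set z : Fin n → ℂ := fun i => p i + (u i : ℂ) with hz_def
  have hz : ∀ i, ‖z i - p i‖ < r i := fun i => by
    simp only [hz_def, add_sub_cancel_left, Complex.norm_real, Real.norm_eq_abs,
      abs_of_pos (hu0 i)]
    exact hur i
  have habs_u : ∀ I : List (Fin n),
      ‖wprod (fun i => z i - p i) I‖ = (I.map u).prod := by
    intro I
    unfold wprod
    rw [List.norm_prod, List.map_map]
    congr 1
    refine List.map_congr_left fun i _ => ?_
    simp [hz_def, abs_of_pos (hu0 i)]
  have S' : Summable (fun I : List (Fin n) =>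
      ‖a I‖ * (I.map u).prod) := by
    have := hconv z hz
    simpa only [habs_u] using this
  -- the abs bound for multiset products
  have hM : ∀ M : Multiset (Fin n),
      ‖mprod (fun i => q i - p i) M‖ ≤ (M.map t).prod := by
    intro M
    induction M using Multiset.induction with
    | empty => simp [mprod]
    | cons i M ih =>
      simp only [mprod, Multiset.map_cons, Multiset.prod_cons, norm_mul] at *
      have h1 : (0:ℝ) ≤ (M.map t).prod := by
        refine Multiset.prod_nonneg ?_
        intro x hx; obtain ⟨j, _, rfl⟩ := Multiset.mem_map.1 hx; exact (ht0 j).le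
      exact mul_le_mul (hqt i).le ih (norm_nonneg _) (ht0 i).le
  -- list t-product ≤ θ^len * u-product
  have hθu : ∀ I : List (Fin n),
      (I.map t).prod ≤ θ ^ I.length * (I.map u).prod := by
    intro I
    induction I with
    | nil => simp
    | cons i I ih =>
      simp only [List.map_cons, List.prod_cons, List.length_cons]
      calc t i * (I.map t).prod ≤ (θ * u i) * (θ ^ I.length * (I.map u).prod) :=
            mul_le_mul (hratio i) ih (hprodnn t (fun j => (ht0 j).le) I)
              (mul_nonneg hθ0 (hu0 i).le)
      _ = θ ^ (I.length + 1) * (u i * (I.map u).prod) := by ring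
  -- main comparison
  refine Summable.of_nonneg_of_le
    (fun I => mul_nonneg (mul_nonneg (Nat.cast_nonneg _) (norm_nonneg _))
      (norm_nonneg _))
    (fun I => ?_) (S'.mul_left (K / (J.map t).prod))
  by_cases hc : chooseCount I J = 0
  · rw [hc]
    simp only [Nat.cast_zero, zero_mul]
    have h0 : (0:ℝ) ≤ (I.map u).prod := hprodnn u (fun j => (hu0 j).le) I
    exact mul_nonneg (div_nonneg hK0 htJ.le)
      (mul_nonneg (norm_nonneg _) h0)
  · -- J is a sublist of I
    obtain ⟨α, hmono, hget⟩ := Set.nonempty_of_ncard_ne_zero hc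
    have hsub : J.Sublist I :=
      List.sublist_iff_exists_fin_orderEmbedding_get_eq.2
        ⟨OrderEmbedding.ofStrictMono α hmono, hget⟩
    have hmle : (J : Multiset (Fin n)) ≤ (I : Multiset (Fin n)) :=
      Multiset.coe_le.2 hsub.subperm
    set k := J.length
    set m := I.length
    set A := ‖a I‖ with hA_def
    have hA : 0 ≤ A := norm_nonneg _
    set tI := (I.map t).prod with htI_def
    set tJ := (J.map t).prod with htJ_def
    set uI := (I.map u).prod with huI_def
    have huInn : 0 ≤ uI := hprodnn u (fun j => (hu0 j).le) I
    have htInn : 0 ≤ tI := hprodnn t (fun j => (ht0 j).le) I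
    -- chooseCount bound
    have hcc : (chooseCount I J : ℝ) ≤ (m : ℝ) ^ k := by
      have h1 : chooseCount I J ≤ m ^ k := by
        calc chooseCount I J ≤ (Set.univ : Set (Fin k → Fin m)).ncard :=
              Set.ncard_le_ncard (Set.subset_univ _) Set.finite_univ
        _ = m ^ k := by
              rw [Set.ncard_univ, Nat.card_eq_fintype_card, Fintype.card_fun]
              simp
      exact_mod_cast h1
    -- the multiset product identity
    have htmul : (((I : Multiset (Fin n)) - J).map t).prod * tJ = tI := by
      have hadd : ((I : Multiset (Fin n)) - J) + J = (I : Multiset (Fin n)) :=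
        tsub_add_cancel_of_le hmle
      have : ((((I : Multiset (Fin n)) - J) + J).map t).prod
          = (((I : Multiset (Fin n)) - J).map t).prod * tJ := by
        rw [Multiset.map_add, Multiset.prod_add]
        simp [htJ_def]
      rw [hadd] at this
      rw [← this]
      simp [htI_def]
    -- diffProd bound
    have hd : ‖diffProd p q I J‖ ≤ tI / tJ := by
      rw [le_div_iff₀ htJ]
      calc ‖diffProd p q I J‖ * tJ
          ≤ (((I : Multiset (Fin n)) - J).map t).prod * tJ :=
            mul_le_mul_of_nonneg_right (hM _) htJ.le
      _ = tI := htmul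
    -- the key K bound
    have hKbound : (m : ℝ) ^ k * tI ≤ K * uI := by
      calc (m : ℝ) ^ k * tI ≤ (m : ℝ) ^ k * (θ ^ m * uI) := by
            exact mul_le_mul_of_nonneg_left (hθu I) (by positivity)
      _ = ((m : ℝ) ^ k * θ ^ m) * uI := by ring
      _ ≤ K * uI := mul_le_mul_of_nonneg_right (hK' m) huInn
    calc (chooseCount I J : ℝ) * A * ‖diffProd p q I J‖
        ≤ ((m : ℝ) ^ k * A) * (tI / tJ) := by
          refine mul_le_mul (mul_le_mul_of_nonneg_right hcc hA) hd
            (norm_nonneg _) (by positivity)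
    _ = (A * ((m : ℝ) ^ k * tI)) / tJ := by ring
    _ ≤ (A * (K * uI)) / tJ := by
          apply div_le_div_of_nonneg_right ?_ htJ.le
          exact mul_le_mul_of_nonneg_left hKbound hA
    _ = K / tJ * (A * uI) := by ring
end
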